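/- Let (X_i) be IID with 0 < E[X] < ∞, N independent of (X_i), and h : [0,∞) → [0,∞) increasing. Fix 0 < c < E[X]. By the strong law of large numbers there is C > 0 with P(S_k > c·k) ≥ C for all k ∈ ℕ. Consequently, for any s > 0, E[exp(s·h(S_N⁺))] ≥ C·E[exp(s·h(c·N))]; in particular if E[exp(s·h(c·N))] = ∞ then E[exp(s·h(S_N⁺))] = ∞. -/

import Mathlib

open MeasureTheory ProbabilityTheory Real Filter
open scoped Topology ENNReal

/-- For an IID random walk with positive finite drift, any `c ∈ (0, E[X])`
admits `C > 0` with `P(S_k > c·k) ≥ C` for all `k ≥ 1`, and consequently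
`E[exp (s h (S_N⁺))] ≥ C · E[exp (s h (c N))]` for every `s > 0`. -/
theorem stopped_sum_exp_scale_lower_bound
    {Ω : Type*} [MeasurableSpace Ω] (μ : Measure Ω) [IsProbabilityMeasure μ]
    (X : ℕ → Ω → ℝ) (hXmeas : ∀ i, Measurable (X i))
    (hXindep : iIndepFun X μ)
    (hXident : ∀ i, IdentDistrib (X i) (X 0) μ μ)
    (hXint : Integrable (X 0) μ) (hEX : 0 < ∫ ω, X 0 ω ∂μ)
    (N : Ω → ℕ) (hNmeas : Measurable N) (hNpos : ∀ ω, 1 ≤ N ω)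
    (hNindep : IndepFun (fun ω i => X i ω) N μ)
    (h : ℝ → ℝ) (hmono : Monotone h) (hnonneg : ∀ x : ℝ, 0 ≤ x → 0 ≤ h x)
    (c : ℝ) (hc0 : 0 < c) (hc : c < ∫ ω, X 0 ω ∂μ) :
    ∃ C : ℝ, 0 < C ∧
      (∀ k : ℕ, 1 ≤ k →
        ENNReal.ofReal C ≤ μ {ω | c * k < ∑ i ∈ Finset.range k, X i ω}) ∧
      ∀ s : ℝ, 0 < s →
        ENNReal.ofReal C *
            ∫⁻ ω, ENNReal.ofReal (Real.exp (s * h (c * N ω))) ∂μ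
          ≤ ∫⁻ ω, ENNReal.ofReal
              (Real.exp (s * h (max (∑ k ∈ Finset.range (N ω), X k ω) 0))) ∂μ := by
  classical
  set E : ℝ := ∫ ω, X 0 ω ∂μ with hEdef
  set S : ℕ → Ω → ℝ := fun n ω => ∑ i ∈ Finset.range n, X i ω with hSdef
  set A : ℕ → Set Ω := fun k => {ω | c * k < S k ω} with hAdef
  have hSmeas : ∀ n, Measurable (S n) :=
    fun n => Finset.measurable_sum _ (fun i _ => hXmeas i)
  have hAmeas : ∀ k, MeasurableSet (A k) :=
    fun k => measurableSet_lt measurable_const (hSmeas k)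
  have hAle : ∀ k, μ (A k) ≤ 1 := fun k => prob_le_one
  have hAneTop : ∀ k, μ (A k) ≠ ⊤ := fun k => ((hAle k).trans_lt ENNReal.one_lt_top).ne
  -- Strong law of large numbers
  have slln : ∀ᵐ ω ∂μ,
      Tendsto (fun n : ℕ => (∑ i ∈ Finset.range n, X i ω) / n) atTop (𝓝 E) :=
    strong_law_ae_real X hXint (fun i j hij => hXindep.indepFun hij) hXident
  -- the indicators of `A k` tend to `1` a.e.
  have hind : ∀ᵐ ω ∂μ,
      Tendsto (fun k : ℕ => Set.indicator (A k) (fun _ => (1 : ℝ≥0∞)) ω) atTop (𝓝 1) := by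
    filter_upwards [slln] with ω hω
    have hev : ∀ᶠ k : ℕ in atTop, ω ∈ A k := by
      have h1 : ∀ᶠ k : ℕ in atTop, c < (∑ i ∈ Finset.range k, X i ω) / k :=
        hω.eventually (eventually_gt_nhds hc)
      filter_upwards [h1, eventually_ge_atTop 1] with k hk hk1
      have hkpos : (0 : ℝ) < k := by exact_mod_cast hk1
      exact (lt_div_iff₀ hkpos).mp hk
    have : ∀ᶠ k : ℕ in atTop,
        Set.indicator (A k) (fun _ => (1 : ℝ≥0∞)) ω = 1 := by
      filter_upwards [hev] with k hk; simp [Set.indicator_of_mem hk]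
    exact Tendsto.congr' (this.mono fun k hk => hk.symm) tendsto_const_nhds
  -- hence `μ (A k) → 1`
  have hmeasTendsto : Tendsto (fun k => μ (A k)) atTop (𝓝 1) := by
    have h1 : Tendsto (fun k => ∫⁻ ω, Set.indicator (A k) (fun _ => (1 : ℝ≥0∞)) ω ∂μ)
        atTop (𝓝 (∫⁻ _ω, (1 : ℝ≥0∞) ∂μ)) := by
      apply tendsto_lintegral_of_dominated_convergence (fun _ => (1 : ℝ≥0∞))
      · exact fun k => (measurable_const.indicator (hAmeas k))
      · exact fun k => ae_of_all _ fun ω => Set.indicator_le_self _ _ ω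
      · simp
      · exact hind
    simpa [lintegral_indicator, hAmeas, lintegral_const] using h1
  -- positivity of each `μ (A k)` for `k ≥ 1`
  have hApos : ∀ k : ℕ, 1 ≤ k → 0 < μ (A k) := by
    intro k hk1
    by_contra hz
    push_neg at hz
    have hz0 : μ (A k) = 0 := le_antisymm hz zero_le
    have hae : ∀ᵐ ω ∂μ, S k ω ≤ c * k := by
      have : μ {ω | ¬ S k ω ≤ c * k} = 0 := by
        convert hz0 using 2
        ext ω; simp [hAdef, not_le]
      exact this
    have hXiint : ∀ i, Integrable (X i) μ := fun i => (hXident i).integrable_iff.mpr hXint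
    have hSint : Integrable (S k) μ := integrable_finset_sum _ fun i _ => hXiint i
    have hint1 : ∫ ω, S k ω ∂μ ≤ ∫ _ω, c * k ∂μ :=
      integral_mono_ae hSint (integrable_const _) hae
    have hSk : ∫ ω, S k ω ∂μ = k * E := by
      rw [hSdef]
      rw [integral_finset_sum _ fun i _ => hXiint i]
      have : ∀ i ∈ Finset.range k, ∫ ω, X i ω ∂μ = E := fun i _ => (hXident i).integral_eq
      rw [Finset.sum_congr rfl this]
      simp [mul_comm]
    rw [hSk, integral_const, probReal_univ] at hint1
    simp only [ENNReal.toReal_one, one_smul] at hint1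
    have hkpos : (0 : ℝ) < k := by exact_mod_cast hk1
    nlinarith
  -- choose `K` beyond which `μ (A k) ≥ 1/2`
  have hhalf : ∀ᶠ k : ℕ in atTop, ENNReal.ofReal (1/2) ≤ μ (A k) := by
    have : ENNReal.ofReal (1/2) < 1 := ENNReal.ofReal_lt_one.mpr (by norm_num)
    exact hmeasTendsto.eventually (eventually_ge_nhds this)
  obtain ⟨K, hK⟩ := eventually_atTop.mp hhalf
  -- define the constant C
  set C : ℝ := (Finset.range (K+1)).inf' ⟨0, by simp⟩
      (fun k => if k = 0 then (1:ℝ)/2 else (μ (A k)).toReal) with hCdef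
  have hCpos : 0 < C := by
    rw [hCdef]; apply (Finset.lt_inf'_iff _).mpr
    intro k _
    by_cases hk0 : k = 0
    · simp [hk0]
    · have hk1 : 1 ≤ k := Nat.one_le_iff_ne_zero.mpr hk0
      simp only [if_neg hk0]
      exact ENNReal.toReal_pos (hApos k hk1).ne' (hAneTop k)
  have hChalf : C ≤ 1/2 := by
    have h0 := Finset.inf'_le (f := fun j : ℕ => if j = 0 then (1:ℝ)/2 else (μ (A j)).toReal)
      (Finset.mem_range.mpr (Nat.succ_pos K))
    rw [if_pos rfl] at h0
    rw [hCdef]; exact h0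
  -- the key estimate `ofReal C ≤ μ (A k)`
  have hCA : ∀ k : ℕ, 1 ≤ k → ENNReal.ofReal C ≤ μ (A k) := by
    intro k hk1
    by_cases hkK : k ≤ K
    · have hmem : k ∈ Finset.range (K+1) := Finset.mem_range.mpr (Nat.lt_succ_of_le hkK)
      have hle : C ≤ (μ (A k)).toReal := by
        have h0 := Finset.inf'_le
          (f := fun j : ℕ => if j = 0 then (1:ℝ)/2 else (μ (A j)).toReal) hmem
        rw [if_neg (Nat.one_le_iff_ne_zero.mp hk1)] at h0
        rw [hCdef]; exact h0
      calc ENNReal.ofReal C ≤ ENNReal.ofReal ((μ (A k)).toReal) :=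
            ENNReal.ofReal_le_ofReal hle
        _ = μ (A k) := ENNReal.ofReal_toReal (hAneTop k)
    · have hkK' : K ≤ k := le_of_not_ge hkK
      calc ENNReal.ofReal C ≤ ENNReal.ofReal (1/2) := ENNReal.ofReal_le_ofReal hChalf
        _ ≤ μ (A k) := hK k hkK'
  refine ⟨C, hCpos, hCA, ?_⟩
  -- main inequality
  intro s hs
  set g : ℕ → ℝ≥0∞ := fun n => ENNReal.ofReal (Real.exp (s * h (c * n))) with hgdef
  have hNset : ∀ n : ℕ, MeasurableSet {ω | N ω = n} :=
    fun n => hNmeas (measurableSet_singleton n)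
  have hdisj : Pairwise (Function.onFun Disjoint (fun n => {ω | N ω = n})) := by
    intro i j hij
    apply Set.disjoint_left.mpr
    intro ω hi hj
    exact hij ((hi : N ω = i).symm.trans hj)
  have hUnion : (⋃ n, {ω | N ω = n}) = Set.univ := by
    ext ω; simp
  have hdecomp : ∀ (F : Ω → ℝ≥0∞),
      ∫⁻ ω, F ω ∂μ = ∑' n : ℕ, ∫⁻ ω in {ω | N ω = n}, F ω ∂μ := by
    intro F
    rw [← setLIntegral_univ, ← hUnion, lintegral_iUnion hNset hdisj]
  -- independence of `S n` and `N`
  have hSN_indep : ∀ n : ℕ, IndepFun (S n) N μ := by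
    intro n
    have hφ : Measurable (fun v : ℕ → ℝ => ∑ i ∈ Finset.range n, v i) :=
      Finset.measurable_sum _ (fun i _ => measurable_pi_apply i)
    exact hNindep.comp hφ measurable_id
  have hindep_mul : ∀ n : ℕ, μ (A n ∩ {ω | N ω = n}) = μ (A n) * μ {ω | N ω = n} := by
    intro n
    have h1 : A n = S n ⁻¹' Set.Ioi (c * n) := rfl
    have h2 : {ω | N ω = n} = N ⁻¹' {n} := rfl
    rw [h1, h2]
    exact (hSN_indep n).measure_inter_preimage_eq_mul _ _ measurableSet_Ioi
      (measurableSet_singleton n)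
  -- the two integrands
  set F : Ω → ℝ≥0∞ := fun ω =>
    ENNReal.ofReal (Real.exp (s * h (max (∑ k ∈ Finset.range (N ω), X k ω) 0))) with hFdef
  set G : Ω → ℝ≥0∞ := fun ω => ENNReal.ofReal (Real.exp (s * h (c * N ω))) with hGdef
  -- value of the left integral
  have hL : ∫⁻ ω, G ω ∂μ = ∑' n : ℕ, g n * μ {ω | N ω = n} := by
    rw [hdecomp G]
    congr 1
    ext n
    rw [show ∫⁻ ω in {ω | N ω = n}, G ω ∂μ = ∫⁻ _ω in {ω | N ω = n}, g n ∂μ from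
      setLIntegral_congr_fun (hNset n) (fun ω hω => by
        simp only [hGdef, hgdef]
        rw [hω]), setLIntegral_const]
  -- per-n lower bound for the right integral
  have hRn : ∀ n : ℕ, ENNReal.ofReal C * (g n * μ {ω | N ω = n})
      ≤ ∫⁻ ω in {ω | N ω = n}, F ω ∂μ := by
    intro n
    rcases Nat.eq_zero_or_pos n with hn0 | hn1
    · have : {ω | N ω = n} = ∅ := by
        ext ω; simp only [Set.mem_setOf_eq, Set.mem_empty_iff_false, iff_false]
        intro hω; exact absurd (hω ▸ hNpos ω) (by omega)
      simp [this]
    · have hsub : A n ∩ {ω | N ω = n} ⊆ {ω | N ω = n} := Set.inter_subset_right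
      have hmeasInter : MeasurableSet (A n ∩ {ω | N ω = n}) := (hAmeas n).inter (hNset n)
      have step1 : ∫⁻ ω in A n ∩ {ω | N ω = n}, g n ∂μ
          ≤ ∫⁻ ω in A n ∩ {ω | N ω = n}, F ω ∂μ := by
        apply setLIntegral_mono' hmeasInter
        intro ω hω
        obtain ⟨hA, hN⟩ := hω
        have hSgt : c * n < S n ω := hA
        have hle : c * n ≤ max (S (N ω) ω) 0 := by
          rw [hN]; exact le_max_of_le_left hSgt.le
        have : h (c * n) ≤ h (max (S (N ω) ω) 0) := hmono hle
        apply ENNReal.ofReal_le_ofReal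
        apply Real.exp_le_exp.mpr
        exact mul_le_mul_of_nonneg_left this hs.le
      have step2 : ∫⁻ ω in A n ∩ {ω | N ω = n}, F ω ∂μ ≤ ∫⁻ ω in {ω | N ω = n}, F ω ∂μ :=
        lintegral_mono_set hsub
      have step0 : ∫⁻ _ω in A n ∩ {ω | N ω = n}, g n ∂μ
          = g n * (μ (A n) * μ {ω | N ω = n}) := by
        rw [setLIntegral_const, hindep_mul n]
      calc ENNReal.ofReal C * (g n * μ {ω | N ω = n})
          = g n * (ENNReal.ofReal C * μ {ω | N ω = n}) := by ring
        _ ≤ g n * (μ (A n) * μ {ω | N ω = n}) := by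
            gcongr
            exact hCA n hn1
        _ = ∫⁻ _ω in A n ∩ {ω | N ω = n}, g n ∂μ := step0.symm
        _ ≤ ∫⁻ ω in {ω | N ω = n}, F ω ∂μ := step1.trans step2
  calc ENNReal.ofReal C * ∫⁻ ω, G ω ∂μ
      = ∑' n : ℕ, ENNReal.ofReal C * (g n * μ {ω | N ω = n}) := by
        rw [hL, ENNReal.tsum_mul_left]
    _ ≤ ∑' n : ℕ, ∫⁻ ω in {ω | N ω = n}, F ω ∂μ := ENNReal.tsum_le_tsum hRn
    _ = ∫⁻ ω, F ω ∂μ := (hdecomp F).symm
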